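/- arXiv:2403.17230 — 5 statements merged into one kernel-verified Lean document; each statement's English description precedes it below -/
import Mathlib

section
/- Let τ and ρ be the ℂ-algebra endomorphisms of R = ℂ[c₁, c₂, c₂', c₃] defined by τ(c₁) = c₁, τ(c₂) = c₂', τ(c₂') = c₂, τ(c₃) = c₃ + c₁·(c₂' − c₂), and ρ(c₁) = c₁, ρ(c₂) = c₂', ρ(c₂') = c₁² − c₂ − c₂', ρ(c₃) = c₃ + c₁·(c₂' − c₂). Then τ ∘ τ = id, ρ ∘ ρ ∘ ρ = id, and τ ∘ ρ ∘ τ = ρ ∘ ρ; in particular τ and ρ generate an action of the symmetric group S₃ on R by ℂ-algebra automorphisms, with τ corresponding to the transposition (12) and ρ to the 3-cycle (123). -/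
open MvPolynomial

/-- The ℂ-algebra endomorphism `τ` of `ℂ[c₁, c₂, c₂', c₃]` (variables `X 0 = c₁`,
`X 1 = c₂`, `X 2 = c₂'`, `X 3 = c₃`): `τ(c₁) = c₁`, `τ(c₂) = c₂'`, `τ(c₂') = c₂`,
`τ(c₃) = c₃ + c₁(c₂' − c₂)`. -/
noncomputable def tauA : MvPolynomial (Fin 4) ℂ →ₐ[ℂ] MvPolynomial (Fin 4) ℂ :=
  aeval ![X 0, X 2, X 1, X 3 + X 0 * (X 2 - X 1)]

/-- The ℂ-algebra endomorphism `ρ` of `ℂ[c₁, c₂, c₂', c₃]`: `ρ(c₁) = c₁`, `ρ(c₂) = c₂'`,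
`ρ(c₂') = c₁² − c₂ − c₂'`, `ρ(c₃) = c₃ + c₁(c₂' − c₂)`. -/
noncomputable def rhoA : MvPolynomial (Fin 4) ℂ →ₐ[ℂ] MvPolynomial (Fin 4) ℂ :=
  aeval ![X 0, X 2, X 0 ^ 2 - X 1 - X 2, X 3 + X 0 * (X 2 - X 1)]

/-- `τ ∘ τ = id`, `ρ ∘ ρ ∘ ρ = id` and `τ ∘ ρ ∘ τ = ρ ∘ ρ`, so that `τ` and `ρ` generate
an `S₃`-action on `ℂ[c₁, c₂, c₂', c₃]` by ℂ-algebra automorphisms, `τ` corresponding to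
the transposition (12) and `ρ` to the 3-cycle (123). -/
theorem stmt_5 :
    tauA.comp tauA = AlgHom.id ℂ (MvPolynomial (Fin 4) ℂ) ∧
    rhoA.comp (rhoA.comp rhoA) = AlgHom.id ℂ (MvPolynomial (Fin 4) ℂ) ∧
    tauA.comp (rhoA.comp tauA) = rhoA.comp rhoA := by
  refine ⟨?_, ?_, ?_⟩ <;> apply MvPolynomial.algHom_ext <;> intro i <;>
    fin_cases i <;>
    simp [tauA, rhoA, Fin.isValue, AlgHom.comp_apply, aeval_X, Matrix.cons_val_zero,
      Matrix.cons_val_one, Matrix.head_cons] <;>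
    ring
end

section
/- Let τ and ρ be the ℂ-algebra endomorphisms of R = ℂ[c₁, c₂, c₂', c₃] defined by τ(c₁) = c₁, τ(c₂) = c₂', τ(c₂') = c₂, τ(c₃) = c₃ + c₁·(c₂' − c₂), and ρ(c₁) = c₁, ρ(c₂) = c₂', ρ(c₂') = c₁² − c₂ − c₂', ρ(c₃) = c₃ + c₁·(c₂' − c₂). Define d₁ = c₁, d₃ = c₁·c₂ − c₃, d₄ = c₂² + c₂'² + c₂·c₂' − c₁²·(c₂ + c₂'), and d₆ = c₂·c₂'·(c₂ + c₂' − c₁²). Then each of d₁, d₃, d₄, d₆ is fixed by both τ and ρ. -/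
open MvPolynomial

/-- `d₁ = c₁`. -/
noncomputable def d₁ : MvPolynomial (Fin 4) ℂ := X 0

/-- `d₃ = c₁c₂ − c₃`. -/
noncomputable def d₃ : MvPolynomial (Fin 4) ℂ := X 0 * X 1 - X 3

/-- `d₄ = c₂² + c₂'² + c₂c₂' − c₁²(c₂ + c₂')`. -/
noncomputable def d₄ : MvPolynomial (Fin 4) ℂ :=
  X 1 ^ 2 + X 2 ^ 2 + X 1 * X 2 - X 0 ^ 2 * (X 1 + X 2)

/-- `d₆ = c₂c₂'(c₂ + c₂' − c₁²)`. -/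
noncomputable def d₆ : MvPolynomial (Fin 4) ℂ :=
  X 1 * X 2 * (X 1 + X 2 - X 0 ^ 2)

/-- Each of the generators `d₁, d₃, d₄, d₆` of the `S₃`-invariant subring is fixed by
both `τ` and `ρ`. -/
theorem stmt_6 :
    tauA d₁ = d₁ ∧ rhoA d₁ = d₁ ∧
    tauA d₃ = d₃ ∧ rhoA d₃ = d₃ ∧
    tauA d₄ = d₄ ∧ rhoA d₄ = d₄ ∧
    tauA d₆ = d₆ ∧ rhoA d₆ = d₆ := by
  refine ⟨?_, ?_, ?_, ?_, ?_, ?_, ?_, ?_⟩ <;>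
    simp only [tauA, rhoA, d₁, d₃, d₄, d₆, map_add, map_sub, map_mul, map_pow, aeval_X,
      Matrix.cons_val_zero, Matrix.cons_val_one, Matrix.head_cons, Matrix.cons_val_two,
      Matrix.tail_cons, Matrix.cons_val_three, Matrix.head_fin_const] <;>
    ring
end

section
/- Let τ and ρ be the ℂ-algebra endomorphisms of R = ℂ[c₁, c₂, c₂', c₃] defined by τ(c₁) = c₁, τ(c₂) = c₂', τ(c₂') = c₂, τ(c₃) = c₃ + c₁·(c₂' − c₂), and ρ(c₁) = c₁, ρ(c₂) = c₂', ρ(c₂') = c₁² − c₂ − c₂', ρ(c₃) = c₃ + c₁·(c₂' − c₂). Define d₁ = c₁, d₃ = c₁·c₂ − c₃, d₄ = c₂² + c₂'² + c₂·c₂' − c₁²·(c₂ + c₂'), and d₆ = c₂·c₂'·(c₂ + c₂' − c₁²). Then a polynomial p ∈ R satisfies τ(p) = p and ρ(p) = p if and only if p lies in the ℂ-subalgebra of R generated by d₁, d₃, d₄, d₆. In other words, the invariant subring R^{S₃} for the S₃-action generated by τ and ρ equals ℂ[d₁, d₃, d₄, d₆]. -/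
open MvPolynomial

namespace Stmt8Aux

abbrev R4 := MvPolynomial (Fin 4) ℂ
abbrev A2 := MvPolynomial (Fin 2) ℂ
abbrev V5 := MvPolynomial (Fin 3 ⊕ Fin 2) ℂ
abbrev T3 := MvPolynomial (Fin 3) A2

noncomputable def Psi : V5 →ₐ[ℂ] R4 :=
  aeval (Sum.elim ![X 1, X 2, X 0 ^ 2 - X 1 - X 2] ![X 0, X 0 * X 1 - X 3])
noncomputable def jj : R4 →ₐ[ℂ] V5 :=
  aeval ![X (.inr 0), X (.inl 0), X (.inl 1), X (.inr 0) * X (.inl 0) - X (.inr 1)]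
noncomputable def rn (g : Equiv.Perm (Fin 3)) : V5 →ₐ[ℂ] V5 :=
  rename (Sum.map g id)

def sP : Equiv.Perm (Fin 3) := Equiv.swap 0 1
def cP : Equiv.Perm (Fin 3) := finRotate 3

lemma psi_jj : Psi.comp jj = AlgHom.id ℂ R4 := by
  apply algHom_ext; intro i; fin_cases i <;> simp [Psi, jj] <;> ring

lemma equi_s : Psi.comp (rn sP) = tauA.comp Psi := by
  apply algHom_ext; rintro (i | i) <;> fin_cases i <;>
    simp [Psi, rn, tauA, sP, show (Equiv.swap (0:Fin 3) 1) 0 = 1 by decide,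
      show (Equiv.swap (0:Fin 3) 1) 1 = 0 by decide,
      show (Equiv.swap (0:Fin 3) 1) 2 = 2 by decide] <;> ring

lemma equi_c : Psi.comp (rn cP) = rhoA.comp Psi := by
  apply algHom_ext; rintro (i | i) <;> fin_cases i <;>
    simp [Psi, rn, cP, show (finRotate 3 : Equiv.Perm (Fin 3)) 0 = 1 from rfl,
      show (finRotate 3 : Equiv.Perm (Fin 3)) 1 = 2 from rfl,
      show (finRotate 3 : Equiv.Perm (Fin 3)) 2 = 0 from rfl, rhoA] <;> ring

lemma rn_mul (g h : Equiv.Perm (Fin 3)) (x : V5) : rn g (rn h x) = rn (g * h) x := by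
  have h : (Sum.map (⇑g) (id : Fin 2 → Fin 2) ∘ Sum.map (⇑h) (id : Fin 2 → Fin 2)) = Sum.map (⇑(g * h)) (id : Fin 2 → Fin 2) := by
    funext i; cases i <;> simp
  show rename _ (rename _ x) = rename _ x
  rw [rename_rename, h]

lemma rn_one (x : V5) : rn 1 x = x := by
  have h : (Sum.map (⇑(1 : Equiv.Perm (Fin 3))) (id : Fin 2 → Fin 2)) = id := by
    funext i; cases i <;> simp
  simp [rn, h, rename_id]

lemma equi_mul {g h : Equiv.Perm (Fin 3)} {F G : R4 →ₐ[ℂ] R4}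
    (hg : Psi.comp (rn g) = F.comp Psi) (hh : Psi.comp (rn h) = G.comp Psi) :
    Psi.comp (rn (g * h)) = (F.comp G).comp Psi := by
  have h1 : rn (g * h) = (rn g).comp (rn h) := by
    apply algHom_ext; intro i
    simp only [AlgHom.comp_apply]
    rw [rn_mul]
  rw [h1, ← AlgHom.comp_assoc, hg, AlgHom.comp_assoc, hh, ← AlgHom.comp_assoc]

end Stmt8Aux
namespace Stmt8Aux

noncomputable def SA := sumAlgEquiv ℂ (Fin 3) (Fin 2)

lemma sa_rn (e : Equiv.Perm (Fin 3)) (x : V5) :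
    SA (rn e x) = rename e (SA x) := by
  have h : SA.toAlgHom.comp (rn e) =
      ((rename (R := A2) e).restrictScalars ℂ).comp SA.toAlgHom := by
    apply algHom_ext; rintro (i | i) <;>
      simp [SA, rn, sumRingEquiv, mvPolynomialEquivMvPolynomial, sumToIter_Xl, sumToIter_Xr, rename_X]
  exact congrArg (fun (F : V5 →ₐ[ℂ] T3) => F x) h

noncomputable def Phi : T3 →ₐ[ℂ] R4 := Psi.comp SA.symm.toAlgHom

lemma phi_X (k : Fin 3) :
    Phi (X k) = (Sum.elim ![X 1, X 2, X 0 ^ 2 - X 1 - X 2] ![X 0, X 0 * X 1 - X 3] : _ → R4) (.inl k) := by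
  have : (SA.symm (X k) : V5) = X (.inl k) := by
    rw [AlgEquiv.symm_apply_eq]
    simp [SA, sumRingEquiv, mvPolynomialEquivMvPolynomial, sumToIter_Xl]
  simp [Phi, this, Psi]

lemma phi_CX (j : Fin 2) :
    Phi (C (X j)) = (Sum.elim ![X 1, X 2, X 0 ^ 2 - X 1 - X 2] ![X 0, X 0 * X 1 - X 3] : _ → R4) (.inr j) := by
  have : (SA.symm (C (X j)) : V5) = X (.inr j) := by
    rw [AlgEquiv.symm_apply_eq]
    simp [SA, sumRingEquiv, mvPolynomialEquivMvPolynomial, sumToIter_Xr]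
  simp [Phi, this, Psi]

end Stmt8Aux
namespace Stmt8Aux

lemma esymm1 : esymm (Fin 3) A2 1 = X 0 + X 1 + X 2 := by
  rw [esymm_one, Fin.sum_univ_three]

lemma esymm2 : esymm (Fin 3) A2 2 = X 0 * X 1 + X 0 * X 2 + X 1 * X 2 := by
  rw [esymm, show Finset.powersetCard 2 (Finset.univ : Finset (Fin 3)) =
    {{0, 1}, {0, 2}, {1, 2}} by decide]
  rw [show ({{0, 1}, {0, 2}, {1, 2}} : Finset (Finset (Fin 3))) =
    insert {0, 1} (insert {0, 2} {{1, 2}}) from rfl]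
  rw [Finset.sum_insert (by decide), Finset.sum_insert (by decide), Finset.sum_singleton]
  rw [show ({0, 1} : Finset (Fin 3)) = insert 0 {1} from rfl,
    Finset.prod_insert (by decide), Finset.prod_singleton]
  rw [show ({0, 2} : Finset (Fin 3)) = insert 0 {2} from rfl,
    Finset.prod_insert (by decide), Finset.prod_singleton]
  rw [show ({1, 2} : Finset (Fin 3)) = insert 1 {2} from rfl,
    Finset.prod_insert (by decide), Finset.prod_singleton]
  ring

lemma esymm3 : esymm (Fin 3) A2 3 = X 0 * X 1 * X 2 := by
  rw [esymm, show Finset.powersetCard 3 (Finset.univ : Finset (Fin 3)) =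
    {{0, 1, 2}} by decide, Finset.sum_singleton]
  rw [show ({0, 1, 2} : Finset (Fin 3)) = insert 0 (insert 1 {2}) from rfl,
    Finset.prod_insert (by decide), Finset.prod_insert (by decide), Finset.prod_singleton]
  ring

lemma phi_esymm1 : Phi (esymm (Fin 3) A2 1) = d₁ * d₁ := by
  rw [esymm1]; simp [map_add, phi_X, d₁]; ring

lemma phi_esymm2 : Phi (esymm (Fin 3) A2 2) = -d₄ := by
  rw [esymm2]; simp [map_add, map_mul, phi_X, d₄]; ring

lemma phi_esymm3 : Phi (esymm (Fin 3) A2 3) = -d₆ := by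
  rw [esymm3]; simp [map_mul, phi_X, d₆]; ring

lemma phi_adjoin {S : Set T3} {x : T3} (hx : x ∈ Algebra.adjoin A2 S) :
    Phi x ∈ Algebra.adjoin ℂ (Phi '' S ∪ Set.range fun j : Fin 2 => Phi (C (X j))) := by
  induction hx using Algebra.adjoin_induction with
  | mem y hy => exact Algebra.subset_adjoin (Or.inl ⟨y, hy, rfl⟩)
  | algebraMap a =>
    have ha : a ∈ Algebra.adjoin ℂ (Set.range (X : Fin 2 → A2)) := by
      rw [adjoin_range_X]; trivial
    rw [show (algebraMap A2 T3) a = C a from rfl]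
    induction ha using Algebra.adjoin_induction with
    | mem y hy =>
      obtain ⟨j, rfl⟩ := hy
      exact Algebra.subset_adjoin (Or.inr ⟨j, rfl⟩)
    | algebraMap r =>
      rw [show (C (algebraMap ℂ A2 r) : T3) = algebraMap ℂ T3 r from rfl, AlgHom.commutes]
      exact Subalgebra.algebraMap_mem _ r
    | add x y _ _ hx hy => rw [map_add, map_add]; exact add_mem hx hy
    | mul x y _ _ hx hy => rw [map_mul, map_mul]; exact mul_mem hx hy
  | add x y _ _ hx hy => rw [map_add]; exact add_mem hx hy
  | mul x y _ _ hx hy => rw [map_mul]; exact mul_mem hx hy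

end Stmt8Aux

open Stmt8Aux

/-- A polynomial `p ∈ ℂ[c₁, c₂, c₂', c₃]` is fixed by both `τ` and `ρ` (i.e. is
`S₃`-invariant) if and only if it lies in the ℂ-subalgebra generated by
`d₁, d₃, d₄, d₆`: the invariant subring is `ℂ[d₁, d₃, d₄, d₆]`. -/
theorem stmt_8 (p : MvPolynomial (Fin 4) ℂ) :
    (tauA p = p ∧ rhoA p = p) ↔
      p ∈ Algebra.adjoin ℂ ({d₁, d₃, d₄, d₆} : Set (MvPolynomial (Fin 4) ℂ)) := by
  constructor
  · rintro ⟨hτ, hρ⟩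
    have hPj : ∀ x : R4, Psi (jj x) = x := fun x => DFunLike.congr_fun psi_jj x
    have key : ∀ (g : Equiv.Perm (Fin 3)) (F : R4 →ₐ[ℂ] R4),
        Psi.comp (rn g) = F.comp Psi → F p = p → Psi (rn g (jj p)) = p := by
      intro g F h hF
      have h2 := DFunLike.congr_fun h (jj p)
      simp only [AlgHom.comp_apply] at h2
      rw [h2, hPj, hF]
    have H1 : Psi.comp (rn 1) = (AlgHom.id ℂ R4).comp Psi := by
      have h1 : rn (1 : Equiv.Perm (Fin 3)) = AlgHom.id ℂ V5 := AlgHom.ext fun x => rn_one x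
      rw [h1]; ext x <;> simp
    have Hcc := equi_mul equi_c equi_c
    have Hsc := equi_mul equi_s equi_c
    have Hscc := equi_mul Hsc equi_c
    have T1 : Psi (rn 1 (jj p)) = p := key 1 _ H1 rfl
    have T2 : Psi (rn sP (jj p)) = p := key sP _ equi_s hτ
    have T3 : Psi (rn cP (jj p)) = p := key cP _ equi_c hρ
    have T4 : Psi (rn (cP * cP) (jj p)) = p := key _ _ Hcc (by simp [AlgHom.comp_apply, hρ])
    have T5 : Psi (rn (sP * cP) (jj p)) = p := key _ _ Hsc (by simp [AlgHom.comp_apply, hρ, hτ])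
    have T6 : Psi (rn (sP * cP * cP) (jj p)) = p := key _ _ Hscc
      (by simp [AlgHom.comp_apply, hρ, hτ])
    set q : V5 := (6 : ℂ)⁻¹ • (rn 1 (jj p) + rn sP (jj p) + rn cP (jj p)
      + rn (cP * cP) (jj p) + rn (sP * cP) (jj p) + rn (sP * cP * cP) (jj p)) with hqdef
    have hPsiq : Psi q = p := by
      rw [hqdef]
      simp only [map_smul, map_add, T1, T2, T3, T4, T5, T6]
      rw [show p + p + p + p + p + p = (6 : ℂ) • p by module, smul_smul]
      norm_num
    have hqs : rn sP q = q := by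
      rw [hqdef]
      simp only [map_smul, map_add, rn_mul,
        show sP * 1 = sP by decide, show sP * sP = 1 by decide,
        show sP * (cP * cP) = sP * cP * cP by decide,
        show sP * (sP * cP) = cP by decide,
        show sP * (sP * cP * cP) = cP * cP by decide]
      ring
    have hqc : rn cP q = q := by
      rw [hqdef]
      simp only [map_smul, map_add, rn_mul,
        show cP * 1 = cP by decide, show cP * sP = sP * cP * cP by decide,
        show cP * (cP * cP) = 1 by decide,
        show cP * (sP * cP) = sP by decide,
        show cP * (sP * cP * cP) = sP * cP by decide]
      ring
    have henum : ∀ e : Equiv.Perm (Fin 3),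
        e = 1 ∨ e = sP ∨ e = cP ∨ e = cP * cP ∨ e = sP * cP ∨ e = sP * cP * cP := by decide
    have hq : ∀ e : Equiv.Perm (Fin 3), rn e q = q := by
      intro e
      rcases henum e with rfl | rfl | rfl | rfl | rfl | rfl
      · exact rn_one q
      · exact hqs
      · exact hqc
      · rw [← rn_mul, hqc, hqc]
      · rw [← rn_mul, hqc, hqs]
      · rw [← rn_mul, ← rn_mul, hqc, hqc, hqs]
    have hsym : (SA q).IsSymmetric := fun e => by rw [← sa_rn, hq]
    obtain ⟨F0, hF0⟩ := (esymmAlgHom_fin_bijective A2 3).2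
      ⟨SA q, (mem_symmetricSubalgebra _).mpr hsym⟩
    have hq' : aeval (fun i : Fin 3 => esymm (Fin 3) A2 ((i : ℕ) + 1)) F0 = SA q := by
      have h3 := congrArg Subtype.val hF0
      rwa [esymmAlgHom_apply] at h3
    have hmem : SA q ∈ Algebra.adjoin A2
        (Set.range fun i : Fin 3 => esymm (Fin 3) A2 ((i : ℕ) + 1)) := by
      rw [Algebra.adjoin_range_eq_range_aeval]
      exact ⟨F0, hq'⟩
    have hPhi : Phi (SA q) = p := by
      have h4 : SA.symm (SA q) = q := AlgEquiv.symm_apply_apply _ _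
      simp only [Phi, AlgHom.comp_apply, AlgEquiv.toAlgHom_eq_coe, AlgHom.coe_coe]
      exact (congrArg Psi h4).trans hPsiq
    have final := phi_adjoin hmem
    rw [hPhi] at final
    refine Algebra.adjoin_le ?_ final
    rintro x (⟨y, ⟨i, rfl⟩, rfl⟩ | ⟨j, rfl⟩)
    · fin_cases i
      · show Phi (esymm (Fin 3) A2 1) ∈ _
        rw [phi_esymm1]
        exact mul_mem (Algebra.subset_adjoin (by simp)) (Algebra.subset_adjoin (by simp))
      · show Phi (esymm (Fin 3) A2 2) ∈ _
        rw [phi_esymm2]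
        exact neg_mem (Algebra.subset_adjoin (by simp))
      · show Phi (esymm (Fin 3) A2 3) ∈ _
        rw [phi_esymm3]
        exact neg_mem (Algebra.subset_adjoin (by simp))
    · fin_cases j
      · show Phi (C (X 0)) ∈ _
        rw [phi_CX]
        simp only [Sum.elim_inr, Matrix.cons_val_zero]
        exact Algebra.subset_adjoin (Set.mem_insert d₁ _)
      · show Phi (C (X 1)) ∈ _
        rw [phi_CX]
        simp only [Sum.elim_inr, Matrix.cons_val_one, Matrix.head_cons]
        exact Algebra.subset_adjoin (by right; left; rfl)
  · intro h
    have hτle : Algebra.adjoin ℂ ({d₁, d₃, d₄, d₆} : Set R4)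
        ≤ AlgHom.equalizer tauA (AlgHom.id ℂ R4) := by
      refine Algebra.adjoin_le ?_
      rintro x (rfl | rfl | rfl | rfl) <;>
        refine (AlgHom.mem_equalizer _ _ _).mpr ?_ <;>
        simp [tauA, d₁, d₃, d₄, d₆] <;> ring
    have hρle : Algebra.adjoin ℂ ({d₁, d₃, d₄, d₆} : Set R4)
        ≤ AlgHom.equalizer rhoA (AlgHom.id ℂ R4) := by
      refine Algebra.adjoin_le ?_
      rintro x (rfl | rfl | rfl | rfl) <;>
        refine (AlgHom.mem_equalizer _ _ _).mpr ?_ <;>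
        simp [rhoA, d₁, d₃, d₄, d₆] <;> ring
    exact ⟨hτle h, hρle h⟩
end

section
/- Let τ and ρ be the ℂ-algebra endomorphisms of R = ℂ[c₁, c₂, c₂', c₃] defined by τ(c₁) = c₁, τ(c₂) = c₂', τ(c₂') = c₂, τ(c₃) = c₃ + c₁·(c₂' − c₂), and ρ(c₁) = c₁, ρ(c₂) = c₂', ρ(c₂') = c₁² − c₂ − c₂', ρ(c₃) = c₃ + c₁·(c₂' − c₂). In R set c₃' = c₃ + c₁·(c₂' − c₂), c₄ = c₁·(c₃ + c₃') − (c₂² + c₂·c₂' + c₂'²), c₆ = c₃² − c₁·c₂·(c₃ + c₃') + c₂·c₂'·(c₂ + c₂'), and Δ = 4·c₄³ + 27·c₆². Then τ(c₄) = c₄, ρ(c₄) = c₄, τ(c₆) = c₆, ρ(c₆) = c₆, and consequently τ(Δ) = Δ and ρ(Δ) = Δ. -/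
open MvPolynomial

/-- `c₃' = c₃ + c₁(c₂' − c₂)`. -/
noncomputable def c₃' : MvPolynomial (Fin 4) ℂ := X 3 + X 0 * (X 2 - X 1)

/-- The Weierstrass coefficient `c₄ = c₁(c₃ + c₃') − (c₂² + c₂c₂' + c₂'²)`. -/
noncomputable def c₄ : MvPolynomial (Fin 4) ℂ :=
  X 0 * (X 3 + c₃') - (X 1 ^ 2 + X 1 * X 2 + X 2 ^ 2)

/-- The Weierstrass coefficient `c₆ = c₃² − c₁c₂(c₃ + c₃') + c₂c₂'(c₂ + c₂')`. -/
noncomputable def c₆ : MvPolynomial (Fin 4) ℂ :=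
  X 3 ^ 2 - X 0 * X 1 * (X 3 + c₃') + X 1 * X 2 * (X 1 + X 2)

/-- The discriminant `Δ = 4c₄³ + 27c₆²`. -/
noncomputable def Δ : MvPolynomial (Fin 4) ℂ := 4 * c₄ ^ 3 + 27 * c₆ ^ 2

/-- The Weierstrass coefficients `c₄, c₆` and hence the discriminant `Δ = 4c₄³ + 27c₆²`
are fixed by both generators `τ` and `ρ` of the `S₃`-action. -/
theorem stmt_9 :
    tauA c₄ = c₄ ∧ rhoA c₄ = c₄ ∧
    tauA c₆ = c₆ ∧ rhoA c₆ = c₆ ∧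
    tauA Δ = Δ ∧ rhoA Δ = Δ := by
  have hc4t : tauA c₄ = c₄ := by
    simp only [tauA, c₄, c₃', map_sub, map_add, map_mul, map_pow, aeval_X,
      Matrix.cons_val_zero, Matrix.cons_val_one, Matrix.head_cons,
      Matrix.cons_val_two, Matrix.tail_cons, Matrix.cons_val_three]
    ring
  have hc4r : rhoA c₄ = c₄ := by
    simp only [rhoA, c₄, c₃', map_sub, map_add, map_mul, map_pow, aeval_X,
      Matrix.cons_val_zero, Matrix.cons_val_one, Matrix.head_cons,
      Matrix.cons_val_two, Matrix.tail_cons, Matrix.cons_val_three]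
    ring
  have hc6t : tauA c₆ = c₆ := by
    simp only [tauA, c₆, c₃', map_sub, map_add, map_mul, map_pow, aeval_X,
      Matrix.cons_val_zero, Matrix.cons_val_one, Matrix.head_cons,
      Matrix.cons_val_two, Matrix.tail_cons, Matrix.cons_val_three]
    ring
  have hc6r : rhoA c₆ = c₆ := by
    simp only [rhoA, c₆, c₃', map_sub, map_add, map_mul, map_pow, aeval_X,
      Matrix.cons_val_zero, Matrix.cons_val_one, Matrix.head_cons,
      Matrix.cons_val_two, Matrix.tail_cons, Matrix.cons_val_three]
    ring
  refine ⟨hc4t, hc4r, hc6t, hc6r, ?_, ?_⟩ <;>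
    simp [Δ, map_add, map_mul, map_pow, map_ofNat, hc4t, hc4r, hc6t, hc6r]
end

section
/- Let A be a Noetherian local commutative ring with maximal ideal m in which 2 is a unit, and suppose m is principal, generated by an element f. Let σ : A → A be a ring automorphism with σ ∘ σ = id such that σ(a) − a ∈ m for every a ∈ A and σ(f) − f ∈ m². Then σ is the identity map of A. -/
/-- Local-ring rigidity (core of the paper's Lemma 3.7): if `A` is a Noetherian local
commutative ring in which `2` is a unit, whose maximal ideal is principal with generator
`f`, and `σ` is a ring involution of `A` such that `σ(a) − a ∈ m` for all `a` and
`σ(f) − f ∈ m²`, then `σ` is the identity. -/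
theorem stmt_11 {A : Type*} [CommRing A] [IsNoetherianRing A] [IsLocalRing A]
    (h2 : IsUnit (2 : A)) (f : A)
    (hf : IsLocalRing.maximalIdeal A = Ideal.span {f})
    (σ : A ≃+* A) (hσ : ∀ a, σ (σ a) = a)
    (hm : ∀ a, σ a - a ∈ IsLocalRing.maximalIdeal A)
    (hf2 : σ f - f ∈ IsLocalRing.maximalIdeal A ^ 2) :
    ∀ a, σ a = a := by
  set m := IsLocalRing.maximalIdeal A with hmdef
  have hfm : f ∈ m := by rw [hf]; exact Ideal.subset_span rfl
  have hσfm : σ f ∈ m := by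
    have := m.add_mem (hm f) hfm; simpa using this
  -- key power lemma
  have hpow : ∀ n : ℕ, σ f ^ (n + 1) - f ^ (n + 1) ∈ m ^ n * m ^ 2 := by
    intro n
    induction n with
    | zero => simpa using hf2
    | succ n ih =>
      have key : σ f ^ (n + 2) - f ^ (n + 2)
          = σ f * (σ f ^ (n + 1) - f ^ (n + 1)) + (σ f - f) * f ^ (n + 1) := by
        ring
      rw [key]
      refine Ideal.add_mem _ ?_ ?_
      · have : σ f * (σ f ^ (n + 1) - f ^ (n + 1)) ∈ m * (m ^ n * m ^ 2) :=
          Ideal.mul_mem_mul hσfm ih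
        have heq : m * (m ^ n * m ^ 2) = m ^ (n + 1) * m ^ 2 := by ring
        rwa [heq] at this
      · have : (σ f - f) * f ^ (n + 1) ∈ m ^ 2 * m ^ (n + 1) :=
          Ideal.mul_mem_mul hf2 (Ideal.pow_mem_pow hfm _)
        have heq : m ^ 2 * m ^ (n + 1) = m ^ (n + 1) * m ^ 2 := by ring
        rwa [heq] at this
  -- main induction
  have main : ∀ k : ℕ, ∀ a : A, σ a - a ∈ m ^ (k + 1) := by
    intro k
    induction k with
    | zero => intro a; simpa using hm a
    | succ k ih =>
      intro a
      have ha := ih a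
      rw [hf, Ideal.span_singleton_pow, Ideal.mem_span_singleton] at ha
      obtain ⟨c, hc⟩ := ha
      have hc' : σ a - a = c * f ^ (k + 1) := by rw [hc]; ring
      have hσeq : a - σ a = σ c * σ f ^ (k + 1) := by
        have := congrArg σ hc'
        simpa [hσ a, map_sub, map_mul, map_pow] using this
      have hsum : c * f ^ (k + 1) + σ c * σ f ^ (k + 1) = 0 := by
        rw [← hc', ← hσeq]; ring
      have h2c : (2 : A) * (c * f ^ (k + 1))
          = (c - σ c) * f ^ (k + 1) - σ c * (σ f ^ (k + 1) - f ^ (k + 1)) := by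
        linear_combination hsum
      have hmem1 : (c - σ c) * f ^ (k + 1) ∈ m ^ (k + 2) := by
        have h1 : c - σ c ∈ m := by
          have := m.neg_mem (hm c); simpa using this
        have : (c - σ c) * f ^ (k + 1) ∈ m * m ^ (k + 1) :=
          Ideal.mul_mem_mul h1 (Ideal.pow_mem_pow hfm _)
        rwa [← pow_succ'] at this
      have hmem2 : σ c * (σ f ^ (k + 1) - f ^ (k + 1)) ∈ m ^ (k + 2) := by
        have h1 := hpow k
        have h2 : m ^ k * m ^ 2 = m ^ (k + 2) := by rw [← pow_add]
        rw [h2] at h1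
        exact Ideal.mul_mem_left _ _ h1
      have h2cm : (2 : A) * (c * f ^ (k + 1)) ∈ m ^ (k + 2) := by
        rw [h2c]; exact Ideal.sub_mem _ hmem1 hmem2
      obtain ⟨u, hu⟩ := h2
      have : c * f ^ (k + 1) = ↑u⁻¹ * ((2 : A) * (c * f ^ (k + 1))) := by
        rw [← mul_assoc, ← hu, Units.inv_mul, one_mul]
      rw [hc', this]
      exact Ideal.mul_mem_left _ _ h2cm
  intro a
  have hbot : σ a - a ∈ (⊥ : Ideal A) := by
    rw [← Ideal.iInf_pow_eq_bot_of_isLocalRing m (IsLocalRing.maximalIdeal.isMaximal A).ne_top]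
    refine Ideal.mem_iInf.2 fun k => ?_
    cases k with
    | zero => simp
    | succ k => exact main k a
  have : σ a - a = 0 := by simpa using hbot
  exact sub_eq_zero.mp this
end
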